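/- Let d ≥ 2 and let γ : ℝ → ℝ^d be differentiable on a nondegenerate interval I with γ'(t) timelike for every t ∈ I. Then every chord of γ is timelike: for all x, y ∈ I with x ≠ y, the vector γ(x) − γ(y) is timelike, i.e. (γ(x)₀ − γ(y)₀)² > (γ(x)₁ − γ(y)₁)² + ⋯ + (γ(x)_{d−1} − γ(y)_{d−1})². -/

import Mathlib

open Finset Set

private lemma aux_pos (d : ℕ) [NeZero d] (hd : 2 ≤ d)
    (I : Set ℝ) (hI : Convex ℝ I)
    (γ γ' : ℝ → Fin d → ℝ)
    (hγ : ∀ t ∈ I, HasDerivAt γ (γ' t) t)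
    (htl : ∀ t ∈ I, ∑ i ∈ Finset.univ.erase (0 : Fin d), (γ' t i) ^ 2 < (γ' t 0) ^ 2)
    (hpos : ∀ t ∈ I, 0 < γ' t 0) :
    ∀ x ∈ I, ∀ y ∈ I, x < y →
      ∑ i ∈ Finset.univ.erase (0 : Fin d), (γ y i - γ x i) ^ 2 < (γ y 0 - γ x 0) ^ 2 := by
  intro x hx y hy hxy
  -- Step 1: for every u with spatial norm ≤ 1, the "u-chord" inequality holds
  have key : ∀ u : Fin d → ℝ, (∑ i ∈ Finset.univ.erase (0 : Fin d), (u i) ^ 2) ≤ 1 →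
      ∑ i ∈ Finset.univ.erase (0 : Fin d), u i * (γ y i - γ x i) < γ y 0 - γ x 0 := by
    intro u hu
    set f : ℝ → ℝ := fun t => γ t 0 - ∑ i ∈ Finset.univ.erase (0 : Fin d), u i * γ t i with hf
    have hderiv : ∀ t ∈ I,
        HasDerivAt f (γ' t 0 - ∑ i ∈ Finset.univ.erase (0 : Fin d), u i * γ' t i) t := by
      intro t ht
      have hpi := hasDerivAt_pi.mp (hγ t ht)
      exact (hpi 0).sub (HasDerivAt.fun_sum fun i _ => (hpi i).const_mul (u i))
    have hderiv_pos : ∀ t ∈ I,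
        0 < γ' t 0 - ∑ i ∈ Finset.univ.erase (0 : Fin d), u i * γ' t i := by
      intro t ht
      have hcs : (∑ i ∈ Finset.univ.erase (0 : Fin d), u i * γ' t i) ^ 2 ≤
          (∑ i ∈ Finset.univ.erase (0 : Fin d), (u i) ^ 2) *
          (∑ i ∈ Finset.univ.erase (0 : Fin d), (γ' t i) ^ 2) := by
        exact Finset.sum_mul_sq_le_sq_mul_sq (Finset.univ.erase (0 : Fin d)) u fun i => γ' t i
      have hsum_nonneg : (0:ℝ) ≤ ∑ i ∈ Finset.univ.erase (0 : Fin d), (γ' t i) ^ 2 :=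
        Finset.sum_nonneg fun i _ => sq_nonneg _
      have hlt : (∑ i ∈ Finset.univ.erase (0 : Fin d), u i * γ' t i) ^ 2 < (γ' t 0) ^ 2 := by
        calc (∑ i ∈ Finset.univ.erase (0 : Fin d), u i * γ' t i) ^ 2
            ≤ (∑ i ∈ Finset.univ.erase (0 : Fin d), (u i) ^ 2) *
              (∑ i ∈ Finset.univ.erase (0 : Fin d), (γ' t i) ^ 2) := hcs
          _ ≤ 1 * (∑ i ∈ Finset.univ.erase (0 : Fin d), (γ' t i) ^ 2) :=
              mul_le_mul_of_nonneg_right hu hsum_nonneg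
          _ = ∑ i ∈ Finset.univ.erase (0 : Fin d), (γ' t i) ^ 2 := one_mul _
          _ < (γ' t 0) ^ 2 := htl t ht
      have habs := abs_lt_of_sq_lt_sq hlt (le_of_lt (hpos t ht))
      have := (abs_lt.mp habs).2
      linarith
    have hmono : StrictMonoOn f I := by
      apply strictMonoOn_of_deriv_pos hI
      · intro t ht
        exact (hderiv t ht).continuousAt.continuousWithinAt
      · intro t ht
        have htI : t ∈ I := interior_subset ht
        rw [(hderiv t htI).deriv]
        exact hderiv_pos t htI
    have := hmono hx hy hxy
    simp only [hf] at this
    have hsum : ∑ i ∈ Finset.univ.erase (0 : Fin d), u i * (γ y i - γ x i) =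
        (∑ i ∈ Finset.univ.erase (0 : Fin d), u i * γ y i) -
        ∑ i ∈ Finset.univ.erase (0 : Fin d), u i * γ x i := by
      rw [← Finset.sum_sub_distrib]; exact Finset.sum_congr rfl fun i _ => by ring
    rw [hsum]; linarith
  -- Step 2: choose a good u
  set Δ : Fin d → ℝ := fun i => γ y i - γ x i with hΔ
  set S : ℝ := ∑ i ∈ Finset.univ.erase (0 : Fin d), (Δ i) ^ 2 with hS
  have hS_nonneg : 0 ≤ S := Finset.sum_nonneg fun i _ => sq_nonneg _
  have h1ne0 : (1 : Fin d) ≠ 0 := by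
    intro h
    have := Fin.val_eq_of_eq h
    simp [Fin.val_one, Nat.mod_eq_of_lt (by omega : 1 < d)] at this
  rcases eq_or_lt_of_le hS_nonneg with hS0 | hSpos
  · -- S = 0
    have hΔ0 : ∀ i ∈ Finset.univ.erase (0 : Fin d), Δ i = 0 := by
      intro i hi
      have := (Finset.sum_eq_zero_iff_of_nonneg (fun j _ => sq_nonneg (Δ j))).mp hS0.symm i hi
      exact pow_eq_zero_iff (n := 2) (by norm_num) |>.mp this
    have hu : (∑ i ∈ Finset.univ.erase (0 : Fin d),
        ((fun i => if i = (1 : Fin d) then (1:ℝ) else 0) i) ^ 2) ≤ 1 := by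
      have he : ∀ i : Fin d, ((if i = (1:Fin d) then (1:ℝ) else 0))^2
          = if i = (1:Fin d) then (1:ℝ) else 0 := by
        intro i; split <;> norm_num
      simp only [he, Finset.sum_ite_eq' (Finset.univ.erase (0 : Fin d)) (1 : Fin d)
        (fun _ => (1:ℝ))]
      simp [h1ne0]
    have hk := key _ hu
    have hz : ∑ i ∈ Finset.univ.erase (0 : Fin d),
        (if i = (1 : Fin d) then (1:ℝ) else 0) * (γ y i - γ x i) = 0 :=
      Finset.sum_eq_zero fun i hi => by
        have h0 : γ y i - γ x i = 0 := hΔ0 i hi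
        by_cases h : i = 1
        · subst h; simp [h0]
        · simp [h]
    rw [hz] at hk
    calc S = 0 := hS0.symm
      _ < (γ y 0 - γ x 0)^2 := by positivity
  · -- S > 0
    have hu : (∑ i ∈ Finset.univ.erase (0 : Fin d),
        ((fun i => Δ i / Real.sqrt S) i) ^ 2) ≤ 1 := by
      have : ∀ i, (Δ i / Real.sqrt S) ^ 2 = (Δ i)^2 / S := by
        intro i
        rw [div_pow, Real.sq_sqrt hS_nonneg]
      simp only [this]
      rw [← Finset.sum_div, ← hS, div_self (ne_of_gt hSpos)]
    have hk := key _ hu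
    have hsum : ∑ i ∈ Finset.univ.erase (0 : Fin d), Δ i / Real.sqrt S * (γ y i - γ x i)
        = Real.sqrt S := by
      have : ∀ i, Δ i / Real.sqrt S * (γ y i - γ x i) = (Δ i)^2 / Real.sqrt S := by
        intro i; simp only [hΔ]; ring
      rw [Finset.sum_congr rfl fun i _ => this i, ← Finset.sum_div, ← hS]
      rw [div_eq_iff (by positivity : Real.sqrt S ≠ 0)]
      exact (Real.mul_self_sqrt hS_nonneg).symm
    rw [hsum] at hk
    have : Real.sqrt S ^ 2 < (γ y 0 - γ x 0) ^ 2 :=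
      pow_lt_pow_left₀ hk (Real.sqrt_nonneg S) (by norm_num)
    rwa [Real.sq_sqrt hS_nonneg] at this

/-- Every chord of a timelike curve is timelike (timelike implies STL). -/
theorem timelike_curve_chords_timelike (d : ℕ) [NeZero d] (hd : 2 ≤ d)
    (I : Set ℝ) (hI : I.OrdConnected) (hI2 : ∃ x ∈ I, ∃ y ∈ I, x ≠ y)
    (γ γ' : ℝ → Fin d → ℝ)
    (hγ : ∀ t ∈ I, HasDerivAt γ (γ' t) t)
    (htl : ∀ t ∈ I, ∑ i ∈ Finset.univ.erase (0 : Fin d), (γ' t i) ^ 2 < (γ' t 0) ^ 2) :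
    ∀ x ∈ I, ∀ y ∈ I, x ≠ y →
      ∑ i ∈ Finset.univ.erase (0 : Fin d), (γ x i - γ y i) ^ 2 < (γ x 0 - γ y 0) ^ 2 := by
  have hConv : Convex ℝ I := convex_iff_ordConnected.mpr hI
  -- γ'₀ never vanishes
  have hne : ∀ t ∈ I, γ' t 0 ≠ 0 := by
    intro t ht h
    have := htl t ht
    rw [h] at this
    have : (0:ℝ) ≤ ∑ i ∈ Finset.univ.erase (0 : Fin d), (γ' t i) ^ 2 :=
      Finset.sum_nonneg fun i _ => sq_nonneg _
    nlinarith [htl t ht]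
  have hdw : ∀ t ∈ I, HasDerivWithinAt (fun s => γ s 0) (γ' t 0) I t := fun t ht =>
    (hasDerivAt_pi.mp (hγ t ht) 0).hasDerivWithinAt
  have hdich := hasDerivWithinAt_forall_lt_or_forall_gt_of_forall_ne hConv hdw
    (m := 0) hne
  -- main claim for x < y
  have main : ∀ x ∈ I, ∀ y ∈ I, x < y →
      ∑ i ∈ Finset.univ.erase (0 : Fin d), (γ y i - γ x i) ^ 2 < (γ y 0 - γ x 0) ^ 2 := by
    rcases hdich with hneg | hpos
    · -- γ'₀ < 0 : apply aux_pos to -γ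
      intro x hx y hy hxy
      have := aux_pos d hd I hConv (fun t => -γ t) (fun t => -γ' t)
        (fun t ht => (hγ t ht).neg)
        (fun t ht => by simpa using htl t ht)
        (fun t ht => by simpa using hneg t ht) x hx y hy hxy
      have e : ∀ a b : ℝ, (-a - -b)^2 = (a - b)^2 := fun a b => by ring
      simpa only [Pi.neg_apply, e] using this
    · exact aux_pos d hd I hConv γ γ' hγ htl hpos
  intro x hx y hy hxy
  rcases lt_or_gt_of_ne hxy with h | h
  · have := main x hx y hy h
    have e : ∀ a b : ℝ, (a - b)^2 = (b - a)^2 := fun a b => by ring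
    simpa [e] using this
  · exact main y hy x hx h
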